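/- arXiv:2406.13826 — 3 statements merged into one kernel-verified Lean document; each statement's English description precedes it below -/
import Mathlib

section
/- In a directed acyclic graph G, if two vertices A and B are d-separated by a set C (every path between A and B is blocked by C), then in any graph G′ obtained from G by deleting a subset of the edges, A and B remain d-separated by C, provided that no vertex of C is a collider (or descendant of a collider) whose incoming edges into that collider were deleted along some path; in particular, if C contains no colliders on any path of G between A and B, then edge deletion preserves d-separation of A and B given C. -/
/-! d-separation in directed acyclic graphs, and preservation under edge deletion. -/

namespace DSepStmt8

variable {V : Type*}

/-- A (possibly trivial) undirected path in the directed graph with edge relation `E`: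
a list of pairwise distinct vertices, consecutive ones adjacent in either orientation,
starting at `A` and ending at `B`. -/
def IsPath (E : V → V → Prop) (A B : V) (p : List V) : Prop :=
  p.Nodup ∧ p.Chain' (fun a b => E a b ∨ E b a) ∧ p.head? = some A ∧ p.getLast? = some B

/-- `m` is a collider on path `p`: an interior vertex whose two adjacent path edges both
point into it. -/
def IsColliderOn (E : V → V → Prop) (p : List V) (m : V) : Prop :=
  ∃ (i : ℕ), ∃ a b, p[i]? = some a ∧ p[i + 1]? = some m ∧ p[i + 2]? = some b ∧
    E a m ∧ E b m

/-- The path `p` is blocked by the conditioning set `C`: some interior triple `(a, m, b)` of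
consecutive vertices is such that either `m` is a non-collider lying in `C`, or `m` is a
collider such that neither `m` nor any of its descendants lies in `C`. -/
def Blocked (E : V → V → Prop) (C : Set V) (p : List V) : Prop :=
  ∃ (i : ℕ), ∃ a m b, p[i]? = some a ∧ p[i + 1]? = some m ∧ p[i + 2]? = some b ∧
    ((¬(E a m ∧ E b m)) ∧ m ∈ C ∨
      (E a m ∧ E b m) ∧ ∀ x, Relation.ReflTransGen E m x → x ∉ C)

/-- `A` and `B` are d-separated given `C`: every path between `A` and `B` is blocked by `C`. -/
def DSep (E : V → V → Prop) (C : Set V) (A B : V) : Prop :=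
  ∀ p, IsPath E A B p → Blocked E C p

end DSepStmt8


lemma chain'_rel_of_get? {V : Type*} {R : V → V → Prop} {p : List V}
    (h : p.Chain' R) {i : ℕ} {a b : V}
    (ha : p[i]? = some a) (hb : p[i+1]? = some b) : R a b := by
  rw [List.getElem?_eq_some_iff] at ha hb
  obtain ⟨h1, rfl⟩ := ha
  obtain ⟨h2, rfl⟩ := hb
  exact List.isChain_iff_getElem.mp h i h2

open DSepStmt8

/-- In a finite DAG, if `A` and `B` are d-separated by `C`, and `C` contains no
collider (nor descendant of a collider) of any path of `G` between `A` and `B`, then deleting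
edges (passing to a subrelation `E'` of `E`) preserves d-separation of `A` and `B` given `C`. -/
theorem dsep_preserved_under_edge_deletion
    {V : Type*} [Fintype V]
    (E E' : V → V → Prop)
    (hacyclic : ∀ v : V, ¬ Relation.TransGen E v v)
    (hsub : ∀ a b, E' a b → E a b)
    (A B : V) (C : Set V)
    (hnoColliderInC : ∀ p, IsPath E A B p → ∀ m, IsColliderOn E p m →
      ∀ x, Relation.ReflTransGen E m x → x ∉ C)
    (hdsep : DSep E C A B) :
    DSep E' C A B := by
  intro p hp'
  have hp : IsPath E A B p :=
    ⟨hp'.1, hp'.2.1.imp (fun a b h => h.imp (hsub a b) (hsub b a)), hp'.2.2⟩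
  obtain ⟨i, a, m, b, h1, h2, h3, hcase⟩ := hdsep p hp
  refine ⟨i, a, m, b, h1, h2, h3, ?_⟩
  rcases hcase with ⟨hnc, hmC⟩ | ⟨⟨hEam, hEbm⟩, hdesc⟩
  · exact Or.inl ⟨fun ⟨h, h'⟩ => hnc ⟨hsub _ _ h, hsub _ _ h'⟩, hmC⟩
  · have ham : E' a m ∨ E' m a := chain'_rel_of_get? hp'.2.1 h1 h2
    have hbm : E' b m ∨ E' m b := (chain'_rel_of_get? hp'.2.1 h2 h3).symm
    have h'am : E' a m := by
      rcases ham with h | h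
      · exact h
      · exact absurd ((Relation.TransGen.single hEam).tail (hsub _ _ h)) (hacyclic a)
    have h'bm : E' b m := by
      rcases hbm with h | h
      · exact h
      · exact absurd ((Relation.TransGen.single hEbm).tail (hsub _ _ h)) (hacyclic b)
    exact Or.inr ⟨⟨h'am, h'bm⟩, fun x hx => hdesc x (Relation.ReflTransGen.mono hsub _ _ hx)⟩
end

section
/- In a directed acyclic graph, if A and B are d-separated given C, and M is a vertex that is not a collider (and not a descendant of a collider) on any path between A and B, then A and B are d-separated given C ∪ {M}. -/
/-! d-separation in directed acyclic graphs. -/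

namespace DSepStmt10

variable {V : Type*}

/-- An undirected path in the directed graph with edge relation `E`: a list of pairwise
distinct vertices, consecutive ones adjacent in either orientation, from `A` to `B`. -/
def IsPath (E : V → V → Prop) (A B : V) (p : List V) : Prop :=
  p.Nodup ∧ p.Chain' (fun a b => E a b ∨ E b a) ∧ p.head? = some A ∧ p.getLast? = some B

/-- `m` is a collider on path `p`: an interior vertex whose two adjacent path edges both
point into it. -/
def IsColliderOn (E : V → V → Prop) (p : List V) (m : V) : Prop :=
  ∃ i a b, p[(i : ℕ)]? = some a ∧ p[i + 1]? = some m ∧ p[i + 2]? = some b ∧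
    E a m ∧ E b m

/-- The path `p` is blocked by the conditioning set `S`: some interior triple `(a, m, b)` of
consecutive vertices is such that either `m` is a non-collider in `S`, or `m` is a collider
such that neither `m` nor any of its descendants lies in `S`. -/
def Blocked (E : V → V → Prop) (S : Set V) (p : List V) : Prop :=
  ∃ i a m b, p[(i : ℕ)]? = some a ∧ p[i + 1]? = some m ∧ p[i + 2]? = some b ∧
    ((¬(E a m ∧ E b m)) ∧ m ∈ S ∨
      (E a m ∧ E b m) ∧ ∀ x, Relation.ReflTransGen E m x → x ∉ S)

/-- `A` and `B` are d-separated given `S`: every path between `A` and `B` is blocked by `S`. -/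
def DSep (E : V → V → Prop) (S : Set V) (A B : V) : Prop :=
  ∀ p, IsPath E A B p → Blocked E S p

end DSepStmt10

open DSepStmt10

/-- In a finite DAG, if `A` and `B` are d-separated given `C`, and `M` is
neither a collider nor a descendant of a collider on any path between `A` and `B`, then
`A` and `B` are d-separated given `C ∪ {M}`. -/
theorem dsep_insert_noncollider
    {V : Type*} [Fintype V]
    (E : V → V → Prop)
    (hacyclic : ∀ v : V, ¬ Relation.TransGen E v v)
    (A B M : V) (C : Set V)
    (hdsep : DSep E C A B)
    (hM : ∀ p, IsPath E A B p → ∀ m, IsColliderOn E p m → ¬ Relation.ReflTransGen E m M) :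
    DSep E (C ∪ {M}) A B := by
  intro p hp
  obtain ⟨i, a, m, b, h1, h2, h3, hcase⟩ := hdsep p hp
  refine ⟨i, a, m, b, h1, h2, h3, ?_⟩
  rcases hcase with ⟨hnc, hmC⟩ | ⟨hc, hdesc⟩
  · exact Or.inl ⟨hnc, Or.inl hmC⟩
  · refine Or.inr ⟨hc, fun x hx hxS => ?_⟩
    rcases hxS with hxC | hxM
    · exact hdesc x hx hxC
    · exact hM p hp m ⟨i, a, b, h1, h2, h3, hc⟩ (hxM ▸ hx)
end

section
/- In a DAG containing vertices Z₁, D, M, Y and conditioning set including X, suppose: (i) there is no open path between M and Z₁ given {D, X, Z₂} (implication TIbm), (ii) there is no open path between Y and Z₂ given {D, X, M} (implication TIc), and (iii) there is no open path between Y and Z₁ given {D, X, Z₂} (implication TIam). Then there is no open path between Y and Z₁ given {D, X, M} (implication TId), provided the structural exclusions of Assumption 1 hold (no directed edges Y→M, Y→X, Y→Z₁, Y→Z₂, M→D, M→X, M→Z₁, M→Z₂, Z₂→D, Z₂→X, Z₂→Z₁, D→X, D→Z₁). -/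
/-! d-separation in directed acyclic graphs, applied to the mediation model of the paper. -/

namespace DSepStmt17

variable {V : Type*}

/-- An undirected path in the directed graph with edge relation `E`: a list of pairwise
distinct vertices, consecutive ones adjacent in either orientation, from `A` to `B`. -/
def IsPath (E : V → V → Prop) (A B : V) (p : List V) : Prop :=
  p.Nodup ∧ p.Chain' (fun a b => E a b ∨ E b a) ∧ p.head? = some A ∧ p.getLast? = some B

/-- The path `p` is blocked by the conditioning set `S`: some interior triple `(a, m, b)` of
consecutive vertices is such that either `m` is a non-collider in `S`, or `m` is a collider
such that neither `m` nor any of its descendants lies in `S`. -/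
def Blocked (E : V → V → Prop) (S : Set V) (p : List V) : Prop :=
  ∃ i a m b, p[i]? = some a ∧ p[i + 1]? = some m ∧ p[i + 2]? = some b ∧
    ((¬(E a m ∧ E b m)) ∧ m ∈ S ∨
      (E a m ∧ E b m) ∧ ∀ x, Relation.ReflTransGen E m x → x ∉ S)

/-- `A` and `B` are d-separated given `S`: every path between `A` and `B` is blocked by `S`. -/
def DSep (E : V → V → Prop) (S : Set V) (A B : V) : Prop :=
  ∀ p, IsPath E A B p → Blocked E S p

/-! ### Auxiliary lemmas -/

variable {E : V → V → Prop}

lemma lt_of_get? {p : List V} {i : ℕ} {a : V} (h : p[i]? = some a) : i < p.length := by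
  obtain ⟨h1, _⟩ := List.getElem?_eq_some_iff.mp h
  exact h1

lemma mem_of_get? {p : List V} {i : ℕ} {a : V} (h : p[i]? = some a) : a ∈ p := by
  obtain ⟨h1, h2⟩ := List.getElem?_eq_some_iff.mp h
  exact h2 ▸ List.getElem_mem h1

lemma get?_drop' (p : List V) (n j : ℕ) : (p.drop n)[j]? = p[n + j]? := by
  simp [List.getElem?_drop]

lemma isPath_drop {A B : V} {p : List V} (h : IsPath E A B p) {n : ℕ} {u : V}
    (hn : p[n]? = some u) : IsPath E u B (p.drop n) := by
  obtain ⟨hnd, hch, _, hlast⟩ := h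
  have hlt := lt_of_get? hn
  refine ⟨(List.drop_sublist n p).nodup hnd, hch.drop n, ?_, ?_⟩
  · rw [List.head?_drop]; exact hn
  · rw [List.getLast?_drop, if_neg (by omega)]; exact hlast

lemma isPath_take {A B : V} {p : List V} (h : IsPath E A B p) {n : ℕ} {c : V}
    (hn : p[n]? = some c) : IsPath E A c (p.take (n + 1)) := by
  obtain ⟨hnd, hch, hhd, _⟩ := h
  have hlt := lt_of_get? hn
  refine ⟨(List.take_sublist _ _).nodup hnd, hch.take _, ?_, ?_⟩
  · cases p with
    | nil => simp at hn
    | cons a l => simpa using hhd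
  · have hlen : (p.take (n + 1)).length = n + 1 := by
      rw [List.length_take]; omega
    rw [List.getLast?_eq_getElem?, hlen]
    simp only [Nat.add_sub_cancel]
    rw [List.getElem?_take, if_pos (by omega)]
    exact hn

lemma notBlocked_drop {S : Set V} {p : List V} (h : ¬ Blocked E S p) (n : ℕ) :
    ¬ Blocked E S (p.drop n) := by
  rintro ⟨i, a, v, b, h1, h2, h3, hc⟩
  apply h
  refine ⟨n + i, a, v, b, ?_, ?_, ?_, hc⟩
  · rw [← get?_drop']; exact h1
  · rw [show n + i + 1 = n + (i + 1) by omega, ← get?_drop']; exact h2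
  · rw [show n + i + 2 = n + (i + 2) by omega, ← get?_drop']; exact h3

lemma notBlocked_take {S : Set V} {p : List V} (h : ¬ Blocked E S p) (n : ℕ) :
    ¬ Blocked E S (p.take n) := by
  rintro ⟨i, a, v, b, h1, h2, h3, hc⟩
  apply h
  have conv : ∀ (j : ℕ) (u : V), (p.take n)[j]? = some u → p[j]? = some u := by
    intro j u hu
    rw [List.getElem?_take] at hu
    split_ifs at hu with h'
    exact hu
  exact ⟨i, a, v, b, conv _ _ h1, conv _ _ h2, conv _ _ h3, hc⟩

end DSepStmt17

open DSepStmt17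

/-- Lemma 1(a) of the paper: under the structural exclusions of Assumption 1,
if (TIbm) M ⊥ Z₁ | {D, X, Z₂}, (TIc) Y ⊥ Z₂ | {D, X, M}, and (TIam) Y ⊥ Z₁ | {D, X, Z₂}
hold as d-separations, then (TId) Y ⊥ Z₁ | {D, X, M} holds. -/
theorem TId_of_TIam_TIbm_TIc
    {V : Type*} [Fintype V]
    (E : V → V → Prop)
    (y d m x z₁ z₂ : V)
    (hdistinct : List.Nodup [y, d, m, x, z₁, z₂])
    (hacyclic : ∀ v : V, ¬ Relation.TransGen E v v)
    -- structural exclusions of Assumption 1: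
    (h1 : ¬ E y m) (h2 : ¬ E y x) (h3 : ¬ E y z₁) (h4 : ¬ E y z₂)
    (h5 : ¬ E m d) (h6 : ¬ E m x) (h7 : ¬ E m z₁) (h8 : ¬ E m z₂)
    (h9 : ¬ E z₂ d) (h10 : ¬ E z₂ x) (h11 : ¬ E z₂ z₁)
    (h12 : ¬ E d x) (h13 : ¬ E d z₁)
    -- testable implications:
    (hTIbm : DSep E {d, x, z₂} m z₁)
    (hTIc : DSep E {d, x, m} y z₂)
    (hTIam : DSep E {d, x, z₂} y z₁) :
    DSep E {d, x, m} y z₁ := by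
  intro p hp
  by_contra hop
  classical
  -- Step 1: z₂ does not occur on p, else the prefix of p up to z₂ would be an
  -- open path from y to z₂ given {d, x, m}, contradicting TIc.
  have hz2 : z₂ ∉ p := by
    intro hmem
    obtain ⟨n, hn⟩ := List.getElem?_of_mem hmem
    exact notBlocked_take hop (n + 1) (hTIc _ (isPath_take hp hn))
  -- Step 2: by TIam, p is blocked given {d, x, z₂}.  The blocking triple must be a
  -- collider with no descendant in {d, x, z₂}.
  obtain ⟨i, a0, w0, b0, hia, hiw, hib, hcase⟩ := hTIam p hp
  set T : ℕ → Prop := fun t => ∃ a v c, p[t]? = some a ∧ p[t + 1]? = some v ∧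
      p[t + 2]? = some c ∧ E a v ∧ E c v ∧
      ∀ u, Relation.ReflTransGen E v u → u ∉ ({d, x, z₂} : Set V) with hTdef
  have hiT : T i := by
    rcases hcase with ⟨hnc, hwS⟩ | ⟨⟨hc1, hc2⟩, hnd⟩
    · exfalso
      simp only [Set.mem_insert_iff, Set.mem_singleton_iff] at hwS
      rcases hwS with rfl | rfl | rfl
      · exact hop ⟨i, a0, _, b0, hia, hiw, hib, Or.inl ⟨hnc, Set.mem_insert _ _⟩⟩
      · exact hop ⟨i, a0, _, b0, hia, hiw, hib, Or.inl ⟨hnc, by simp⟩⟩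
      · exact hz2 (mem_of_get? hiw)
    · exact ⟨a0, w0, b0, hia, hiw, hib, hc1, hc2, hnd⟩
  have hilt := lt_of_get? hia
  set t := Nat.findGreatest T p.length with htdef
  have htT : T t := Nat.findGreatest_spec (Nat.le_of_lt hilt) hiT
  have htmax : ∀ k, t < k → k ≤ p.length → ¬ T k := fun k hk hk' =>
    Nat.findGreatest_is_greatest hk hk'
  obtain ⟨a1, w, c1, hta, htw, htc, hE1, hE2, hnd⟩ := htT
  -- the collider w must have m as a descendant (since p is open given {d, x, m})
  have hwm : Relation.ReflTransGen E w m := by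
    by_contra hno
    apply hop
    refine ⟨t, a1, w, c1, hta, htw, htc, Or.inr ⟨⟨hE1, hE2⟩, ?_⟩⟩
    intro u hu hmem
    have h' := hnd u hu
    simp only [Set.mem_insert_iff, Set.mem_singleton_iff] at hmem h'
    push_neg at h'
    rcases hmem with rfl | rfl | rfl
    · exact h'.1 rfl
    · exact h'.2.1 rfl
    · exact hno hu
  -- the suffix of p starting at w is a path from w to z₁, open given {d, x, z₂}
  have hr : IsPath E w z₁ (p.drop (t + 1)) := isPath_drop hp htw
  have hrnb : ¬ Blocked E {d, x, z₂} (p.drop (t + 1)) := by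
    rintro ⟨j, a, v, c, hja, hjv, hjc, hcase'⟩
    rw [get?_drop'] at hja hjv hjc
    have hjv' : p[t + 1 + j + 1]? = some v := by
      rw [show t + 1 + j + 1 = t + 1 + (j + 1) by omega]; exact hjv
    have hjc' : p[t + 1 + j + 2]? = some c := by
      rw [show t + 1 + j + 2 = t + 1 + (j + 2) by omega]; exact hjc
    rcases hcase' with ⟨hnc, hvS⟩ | ⟨⟨hc1, hc2⟩, hnd'⟩
    · simp only [Set.mem_insert_iff, Set.mem_singleton_iff] at hvS
      rcases hvS with rfl | rfl | rfl
      · exact hop ⟨_, _, _, _, hja, hjv', hjc', Or.inl ⟨hnc, Set.mem_insert _ _⟩⟩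
      · exact hop ⟨_, _, _, _, hja, hjv', hjc', Or.inl ⟨hnc, by simp⟩⟩
      · exact hz2 (mem_of_get? hjv')
    · exact htmax (t + 1 + j) (by omega) (by have := lt_of_get? hja; omega)
        ⟨a, v, c, hja, hjv', hjc', hc1, hc2, hnd'⟩
  -- Step 3: walk along the directed path from w to m, maintaining an open path to z₁
  have key : ∀ v, Relation.ReflTransGen E w v →
      ∃ P, IsPath E v z₁ P ∧ ¬ Blocked E {d, x, z₂} P := by
    intro v hv
    induction hv with
    | refl => exact ⟨_, hr, hrnb⟩
    | @tail b c hwb hbc ih =>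
      obtain ⟨P, hP, hPnb⟩ := ih
      by_cases hcP : c ∈ P
      · obtain ⟨n, hn⟩ := List.getElem?_of_mem hcP
        exact ⟨P.drop n, isPath_drop hP hn, notBlocked_drop hPnb n⟩
      · obtain ⟨hnd0, hch, hhd, hlast⟩ := hP
        refine ⟨c :: P, ⟨List.nodup_cons.mpr ⟨hcP, hnd0⟩,
          List.isChain_cons.mpr ⟨?_, hch⟩, rfl, ?_⟩, ?_⟩
        · intro y' hy'
          rw [hhd] at hy'
          simp only [Option.mem_def, Option.some.injEq] at hy'
          subst hy'
          exact Or.inr hbc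
        · cases P with
          | nil => simp at hhd
          | cons p0 P' => rw [List.getLast?_cons_cons]; exact hlast
        · rintro ⟨j, a, v', cc, hja, hjv, hjc, hcase'⟩
          cases j with
          | zero =>
            rw [List.getElem?_cons_zero] at hja
            have ha : a = c := by injection hja with h; exact h.symm
            subst ha
            rw [show (0 : ℕ) + 1 = 0 + 1 from rfl, List.getElem?_cons_succ, ← List.head?_eq_getElem?,
              hhd] at hjv
            have hv0 : v' = b := by injection hjv with h; exact h.symm
            rcases hcase' with ⟨hnc, hvS⟩ | ⟨⟨hc1, hc2⟩, _⟩
            · exact hnd b hwb (hv0 ▸ hvS)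
            · exact hacyclic b
                (Relation.TransGen.head hbc (Relation.TransGen.single (hv0 ▸ hc1)))
          | succ j' =>
            rw [List.getElem?_cons_succ] at hja
            rw [show j' + 1 + 1 = (j' + 1) + 1 from rfl, List.getElem?_cons_succ] at hjv
            rw [show j' + 1 + 2 = (j' + 2) + 1 by omega, List.getElem?_cons_succ] at hjc
            exact hPnb ⟨j', a, v', cc, hja, hjv, hjc, hcase'⟩
  obtain ⟨P, hPm, hPnb⟩ := key m hwm
  exact hPnb (hTIbm P hPm)
end
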